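/- Let f : {0,1}^n → {0,1} and suppose coordinate i is relevant for f but irrelevant for the restriction f_{j=0} (j ≠ i). Then deg_i(f_{j=1}) = deg_i(f) − 1, where deg_i(g) := deg(g(x) − g(x^i)). -/
import Mathlib


open Finset
open scoped Classical

namespace BF

noncomputable section

/-- flip the bits of `x` belonging to `B`. -/
def flipS {n : ℕ} (x : Fin n → Bool) (B : Finset (Fin n)) : Fin n → Bool :=
  fun i => if i ∈ B then !(x i) else x i

/-- flip the `i`-th bit of `x`. -/
def flip1 {n : ℕ} (x : Fin n → Bool) (i : Fin n) : Fin n → Bool :=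
  fun j => if j = i then !(x j) else x j

/-- real value of a boolean. -/
def bval (b : Bool) : ℝ := if b then 1 else 0

/-- coefficient of the monomial `∏_{i ∈ S} x_i` in the unique multilinear
real polynomial expansion of `f` (Möbius inversion over the subcube lattice). -/
def coeffS {n : ℕ} (f : (Fin n → Bool) → ℝ) (S : Finset (Fin n)) : ℝ :=
  ∑ T ∈ S.powerset, (-1 : ℝ) ^ (S.card - T.card) * f (fun i => decide (i ∈ T))

/-- degree of the multilinear expansion of a real-valued function on the cube. -/
def degF {n : ℕ} (f : (Fin n → Bool) → ℝ) : ℕ :=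
  (Finset.univ.filter fun S : Finset (Fin n) => coeffS f S ≠ 0).sup Finset.card

/-- degree of a boolean function. -/
def degB {n : ℕ} (f : (Fin n → Bool) → Bool) : ℕ := degF (fun x => bval (f x))

/-- block sensitivity of `f` at `x`. -/
def bsAt {n : ℕ} (f : (Fin n → Bool) → Bool) (x : Fin n → Bool) : ℕ :=
  (Finset.univ.filter fun 𝓑 : Finset (Finset (Fin n)) =>
      (∀ B ∈ 𝓑, f (flipS x B) ≠ f x) ∧
      ∀ A ∈ 𝓑, ∀ B ∈ 𝓑, A ≠ B → Disjoint A B).sup Finset.card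

/-- block sensitivity of `f`. -/
def bs {n : ℕ} (f : (Fin n → Bool) → Bool) : ℕ := Finset.univ.sup (bsAt f)

/-- sensitivity of `f` at `x`. -/
def sx {n : ℕ} (f : (Fin n → Bool) → Bool) (x : Fin n → Bool) : ℕ :=
  (Finset.univ.filter fun i => f (flip1 x i) ≠ f x).card

/-- (maximum) sensitivity of `f`. -/
def sens {n : ℕ} (f : (Fin n → Bool) → Bool) : ℕ := Finset.univ.sup (sx f)

/-- coordinate `i` is relevant for `f`. -/
def Rel {n : ℕ} (i : Fin n) (f : (Fin n → Bool) → Bool) : Prop :=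
  ∃ x, f (flip1 x i) ≠ f x

/-- the set of relevant coordinates of `f`. -/
def relSet {n : ℕ} (f : (Fin n → Bool) → Bool) : Finset (Fin n) :=
  Finset.univ.filter fun i => Rel i f

/-- the number of relevant variables `n(f)`. -/
def nrel {n : ℕ} (f : (Fin n → Bool) → Bool) : ℕ := (relSet f).card

/-- influence of coordinate `i` on `f` (uniform distribution). -/
def infl {n : ℕ} (f : (Fin n → Bool) → Bool) (i : Fin n) : ℝ :=
  ((Finset.univ.filter fun x : Fin n → Bool => f x ≠ f (flip1 x i)).card : ℝ) / 2 ^ n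

/-- total influence `I[f]`. -/
def totalInf {n : ℕ} (f : (Fin n → Bool) → Bool) : ℝ := ∑ i, infl f i

/-- restriction of `f` fixing the coordinates in `H` according to `α`
(viewed as a function on the full cube not depending on the coordinates in `H`). -/
def restrict {n : ℕ} (f : (Fin n → Bool) → Bool) (H : Finset (Fin n))
    (α : Fin n → Bool) : (Fin n → Bool) → Bool :=
  fun x => f (fun i => if i ∈ H then α i else x i)

/-- certificate complexity of `f` at `x`. -/
def certAt {n : ℕ} (f : (Fin n → Bool) → Bool) (x : Fin n → Bool) : ℕ :=
  sInf {k | ∃ S : Finset (Fin n), S.card = k ∧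
    ∀ y, (∀ i ∈ S, y i = x i) → f y = f x}

/-- certificate complexity `C(f)`. -/
def certC {n : ℕ} (f : (Fin n → Bool) → Bool) : ℕ := Finset.univ.sup (certAt f)

/-- `f` is in standard form: `f(0) = 0` and `f(e_i) = 1` for every basis vector. -/
def stdForm {b : ℕ} (f : (Fin b → Bool) → Bool) : Prop :=
  f (fun _ => false) = false ∧ ∀ i : Fin b, f (fun j => decide (j = i)) = true

end

end BF

open BF

/-- the coordinate degree `deg_i(g) := deg(g(x) − g(x⊕e_i))`. -/
noncomputable def degi {n : ℕ} (g : (Fin n → Bool) → Bool) (i : Fin n) : ℕ :=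
  degF (fun x => bval (g x) - bval (g (flip1 x i)))


section Aux

variable {n : ℕ}

/-- Möbius inversion (the only direction we need): if all coefficients vanish,
the function vanishes. -/
lemma exists_coeff_ne_zero {F : (Fin n → Bool) → ℝ} {x : Fin n → Bool}
    (hx : F x ≠ 0) : ∃ S, coeffS F S ≠ 0 := by
  by_contra h
  push_neg at h
  have key : ∀ S : Finset (Fin n), F (fun k => decide (k ∈ S)) = 0 := by
    intro S
    induction S using Finset.strongInduction with
    | _ S ih =>
      have h0 := h S
      unfold coeffS at h0
      rw [← Finset.add_sum_erase _ _ (Finset.mem_powerset_self S)] at h0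
      have hz : ∑ T ∈ S.powerset.erase S,
          (-1 : ℝ) ^ (S.card - T.card) * F (fun k => decide (k ∈ T)) = 0 := by
        apply Finset.sum_eq_zero
        intro T hT
        rcases Finset.mem_erase.1 hT with ⟨hne, hsub⟩
        have hss : T ⊂ S := lt_of_le_of_ne (Finset.mem_powerset.1 hsub) hne
        rw [ih T hss, mul_zero]
      rw [hz, add_zero, Nat.sub_self, pow_zero, one_mul] at h0
      exact h0
  apply hx
  have : x = fun k => decide (k ∈ Finset.univ.filter fun k => x k = true) := by
    funext k; cases hk : x k <;> simp [hk]
  rw [this, key]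

lemma coeff_notMem {F : (Fin n → Bool) → ℝ} {j : Fin n}
    (hF0 : ∀ x, x j = false → F x = 0) {S : Finset (Fin n)} (hjS : j ∉ S) :
    coeffS F S = 0 := by
  apply Finset.sum_eq_zero
  intro T hT
  have hjT : j ∉ T := fun hj => hjS (Finset.mem_powerset.1 hT hj)
  rw [hF0 _ (by simp [hjT]), mul_zero]

lemma coeff_insert {F G : (Fin n → Bool) → ℝ} {j : Fin n}
    (hFG : ∀ x, F (fun k => if k = j then true else x k) = G x)
    (hF0 : ∀ x, x j = false → F x = 0)
    {S : Finset (Fin n)} (hjS : j ∉ S) :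
    coeffS F (insert j S) = coeffS G S := by
  have hind : ∀ T : Finset (Fin n),
      F (fun k => decide (k ∈ insert j T)) = G (fun k => decide (k ∈ T)) := by
    intro T
    rw [← hFG]
    congr 1
    funext k
    by_cases hk : k = j <;> simp [hk]
  unfold coeffS
  rw [Finset.powerset_insert, Finset.sum_union, Finset.sum_image]
  · have h1 : ∑ T ∈ S.powerset,
        (-1 : ℝ) ^ ((insert j S).card - T.card) * F (fun k => decide (k ∈ T)) = 0 := by
      apply Finset.sum_eq_zero
      intro T hT
      have hjT : j ∉ T := fun hj => hjS (Finset.mem_powerset.1 hT hj)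
      rw [hF0 _ (by simp [hjT]), mul_zero]
    rw [h1, zero_add]
    apply Finset.sum_congr rfl
    intro T hT
    have hjT : j ∉ T := fun hj => hjS (Finset.mem_powerset.1 hT hj)
    rw [hind T, Finset.card_insert_of_notMem hjS, Finset.card_insert_of_notMem hjT,
      Nat.succ_sub_succ]
  · intro T hT T' hT' hE
    have hjT : j ∉ T := fun hj => hjS (Finset.mem_powerset.1 hT hj)
    have hjT' : j ∉ T' := fun hj => hjS (Finset.mem_powerset.1 hT' hj)
    rw [← Finset.erase_insert hjT, hE, Finset.erase_insert hjT']
  · rw [Finset.disjoint_right]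
    intro T hT hT'
    have : j ∈ T := by
      rcases Finset.mem_image.1 hT with ⟨T', _, rfl⟩
      exact Finset.mem_insert_self _ _
    exact (fun hj => hjS (Finset.mem_powerset.1 hT' hj)) this

lemma coeff_indep {G : (Fin n → Bool) → ℝ} {j : Fin n}
    (hG : ∀ x, G (fun k => if k = j then true else x k) = G x)
    {S : Finset (Fin n)} (hjS : j ∈ S) :
    coeffS G S = 0 := by
  have hind : ∀ T : Finset (Fin n),
      G (fun k => decide (k ∈ insert j T)) = G (fun k => decide (k ∈ T)) := by
    intro T
    rw [← hG (fun k => decide (k ∈ T))]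
    congr 1
    funext k
    by_cases hk : k = j <;> simp [hk]
  have hjS' : j ∉ S.erase j := Finset.notMem_erase _ _
  rw [← Finset.insert_erase hjS]
  set S' := S.erase j with hS'
  unfold coeffS
  rw [Finset.powerset_insert, Finset.sum_union, Finset.sum_image]
  · rw [← Finset.sum_add_distrib]
    apply Finset.sum_eq_zero
    intro T hT
    have hTS : T ⊆ S' := Finset.mem_powerset.1 hT
    have hjT : j ∉ T := fun hj => hjS' (hTS hj)
    rw [hind T, Finset.card_insert_of_notMem hjS', Finset.card_insert_of_notMem hjT,
      Nat.succ_sub_succ, ← add_mul]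
    have hle : T.card ≤ S'.card := Finset.card_le_card hTS
    have : S'.card + 1 - T.card = (S'.card - T.card) + 1 := by omega
    rw [this, pow_succ]
    ring_nf
  · intro T hT T' hT' hE
    have hjT : j ∉ T := fun hj => hjS' (Finset.mem_powerset.1 hT hj)
    have hjT' : j ∉ T' := fun hj => hjS' (Finset.mem_powerset.1 hT' hj)
    rw [← Finset.erase_insert hjT, hE, Finset.erase_insert hjT']
  · rw [Finset.disjoint_right]
    intro T hT hT'
    have : j ∈ T := by
      rcases Finset.mem_image.1 hT with ⟨T'', _, rfl⟩
      exact Finset.mem_insert_self _ _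
    exact (fun hj => hjS' (Finset.mem_powerset.1 hT' hj)) this

lemma sup_image_insert {B : Finset (Finset (Fin n))} {j : Fin n} (hB : B.Nonempty)
    (hjB : ∀ S ∈ B, j ∉ S) :
    (B.image (insert j)).sup Finset.card = B.sup Finset.card + 1 := by
  rw [Finset.sup_image]
  apply le_antisymm
  · apply Finset.sup_le
    intro S hS
    simp only [Function.comp_apply]
    rw [Finset.card_insert_of_notMem (hjB S hS)]
    exact Nat.succ_le_succ (Finset.le_sup hS)
  · obtain ⟨S, hS, hmax⟩ := Finset.exists_mem_eq_sup B hB Finset.card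
    rw [hmax]
    have : S.card + 1 = (Finset.card ∘ insert j) S := by
      simp [Finset.card_insert_of_notMem (hjB S hS)]
    rw [this]
    exact Finset.le_sup hS

end Aux

/-- if `i` is relevant for `f` but irrelevant for `f_{j=0}` (`j ≠ i`),
then `deg_i(f_{j=1}) = deg_i(f) − 1`. -/
theorem stmt10 {n : ℕ} (f : (Fin n → Bool) → Bool) (i j : Fin n) (hij : j ≠ i)
    (hrel : Rel i f)
    (h0 : ¬ Rel i (restrict f {j} (fun _ => false))) :
    degi (restrict f {j} (fun _ => true)) i = degi f i - 1 := by
  classical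
  set g := restrict f {j} (fun _ => true) with hg
  set F : (Fin n → Bool) → ℝ := fun x => bval (f x) - bval (f (flip1 x i)) with hF
  set G : (Fin n → Bool) → ℝ := fun x => bval (g x) - bval (g (flip1 x i)) with hG
  -- irrelevance of i for f_{j=0}
  have h0' : ∀ x, BF.restrict f {j} (fun _ => false) (flip1 x i) =
      BF.restrict f {j} (fun _ => false) x := by
    intro x
    by_contra hc
    exact h0 ⟨x, hc⟩
  have hF0 : ∀ x, x j = false → F x = 0 := by
    intro x hxj
    have e1 : (fun k => if k ∈ ({j} : Finset (Fin n)) then false else flip1 x i k)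
        = flip1 x i := by
      funext k
      by_cases hk : k = j
      · subst hk; simp [flip1, hij, hxj]
      · simp [hk]
    have e2 : (fun k => if k ∈ ({j} : Finset (Fin n)) then false else x k) = x := by
      funext k
      by_cases hk : k = j
      · subst hk; simp [hxj]
      · simp [hk]
    have h1 := h0' x
    simp only [BF.restrict, e1, e2] at h1
    simp only [hF, h1, sub_self]
  have hFG : ∀ x, F (fun k => if k = j then true else x k) = G x := by
    intro x
    have e2 : flip1 (fun k => if k = j then true else x k) i
        = (fun k => if k ∈ ({j} : Finset (Fin n)) then true else flip1 x i k) := by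
      funext k
      by_cases hkj : k = j
      · subst hkj; simp [flip1, hij, Ne.symm hij]
      · by_cases hki : k = i
        · subst hki; simp [flip1, hkj, Ne.symm hij]
        · simp [flip1, hkj, hki]
    have e1 : (fun k => if k = j then true else x k)
        = (fun k => if k ∈ ({j} : Finset (Fin n)) then true else x k) := by
      funext k; simp
    simp only [hF, hG, hg, BF.restrict, e2]
    rw [e1]
  have hGtrue : ∀ x, G (fun k => if k = j then true else x k) = G x := by
    intro x
    have e1 : (fun k => if k ∈ ({j} : Finset (Fin n)) then true
        else if k = j then true else x k)
        = (fun k => if k ∈ ({j} : Finset (Fin n)) then true else x k) := by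
      funext k; by_cases hk : k = j <;> simp [hk]
    have e2 : (fun k => if k ∈ ({j} : Finset (Fin n)) then true
        else flip1 (fun k => if k = j then true else x k) i k)
        = (fun k => if k ∈ ({j} : Finset (Fin n)) then true else flip1 x i k) := by
      funext k
      by_cases hkj : k = j
      · simp [hkj]
      · by_cases hki : k = i
        · subst hki; simp [flip1, hkj, Ne.symm hij]
        · simp [flip1, hkj, hki]
    simp only [hG, hg, BF.restrict, e1, e2]
  set A := Finset.univ.filter fun S : Finset (Fin n) => coeffS F S ≠ 0 with hA
  set B := Finset.univ.filter fun S : Finset (Fin n) => coeffS G S ≠ 0 with hB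
  have hBj : ∀ S ∈ B, j ∉ S := by
    intro S hS hj
    exact (Finset.mem_filter.1 hS).2 (coeff_indep hGtrue hj)
  have hAB : A = B.image (insert j) := by
    ext S
    simp only [hA, hB, Finset.mem_filter, Finset.mem_univ, true_and, Finset.mem_image]
    constructor
    · intro hS
      have hjS : j ∈ S := by
        by_contra hj
        exact hS (coeff_notMem hF0 hj)
      refine ⟨S.erase j, ?_, Finset.insert_erase hjS⟩
      have := coeff_insert hFG hF0 (Finset.notMem_erase j S)
      rw [Finset.insert_erase hjS] at this
      rw [← this]
      exact hS
    · rintro ⟨S', hS', rfl⟩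
      have hjS' : j ∉ S' := by
        intro hj
        exact hS' (coeff_indep hGtrue hj)
      rw [coeff_insert hFG hF0 hjS']
      exact hS'
  have hAne : A.Nonempty := by
    obtain ⟨x, hx⟩ := hrel
    have hFx : F x ≠ 0 := by
      simp only [hF]
      cases h1 : f x <;> cases h2 : f (flip1 x i) <;>
        simp_all [bval]
    obtain ⟨S, hS⟩ := exists_coeff_ne_zero hFx
    exact ⟨S, Finset.mem_filter.2 ⟨Finset.mem_univ _, hS⟩⟩
  have hBne : B.Nonempty := by
    obtain ⟨S, hS⟩ := hAne
    rw [hAB] at hS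
    obtain ⟨S', hS', _⟩ := Finset.mem_image.1 hS
    exact ⟨S', hS'⟩
  have hdeg : degF F = degF G + 1 := by
    show A.sup Finset.card = B.sup Finset.card + 1
    rw [hAB]
    exact sup_image_insert hBne hBj
  have hdf : degi f i = degF F := rfl
  have hdg : degi g i = degF G := rfl
  rw [hdg, hdf, hdeg]
  omega
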